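/- Let n ≥ 2, let M_1, …, M_n be DFAs over a common alphabet Σ, and let G be the labeled graph obtained from the third reduction construction applied to M_1, …, M_n. If ⋂_{i=1}^n L(M_i) ≠ ∅, then the minimum length of a synchronizing word for G equals 2 plus the minimum length of a word in ⋂_{i=1}^n L(M_i). -/

import Mathlib

/-- A labeled graph over vertex type `V` and alphabet `A`, given by its
labeled-edge relation: `Edge p a q` means there is an edge labeled `a`
from `p` to `q`. -/
structure LabeledGraph (V A : Type) where
  Edge : V → A → V → Prop

namespace LabeledGraph

variable {V A : Type}

/-- `G.Walk p w q` : there is a (finite) path from `p` to `q` labeled `w`. -/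
def Walk (G : LabeledGraph V A) : V → List A → V → Prop
  | p, [], q => p = q
  | p, a :: w, q => ∃ r, G.Edge p a r ∧ Walk G r w q

/-- The follower set of a vertex: labels of finite paths starting at `q`. -/
def follower (G : LabeledGraph V A) (q : V) : Set (List A) :=
  { w | ∃ q', G.Walk q w q' }

/-- The transition action on sets of vertices: `S·w`. -/
def transSet (G : LabeledGraph V A) (S : Set V) (w : List A) : Set V :=
  { q' | ∃ q ∈ S, G.Walk q w q' }

/-- `G` is deterministic (right-resolving). -/
def Deterministic (G : LabeledGraph V A) : Prop :=
  ∀ p a q q', G.Edge p a q → G.Edge p a q' → q = q'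

/-- `G` is essential: every vertex has an outgoing and an incoming edge. -/
def Essential (G : LabeledGraph V A) : Prop :=
  ∀ q, (∃ a r, G.Edge q a r) ∧ (∃ a p, G.Edge p a q)

/-- The sofic shift presented by `G`: labels of bi-infinite paths. -/
def shift (G : LabeledGraph V A) : Set (ℤ → A) :=
  { x | ∃ v : ℤ → V, ∀ j : ℤ, G.Edge (v j) (x j) (v (j + 1)) }

/-- `w` is a synchronizing word for `G`: `Q_G · w` is a singleton. -/
def SyncWord (G : LabeledGraph V A) (w : List A) : Prop :=
  ∃ r, G.transSet Set.univ w = {r}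

/-- A vertex `q` is synchronizing: some word synchronizes to `q`. -/
def SyncVertex (G : LabeledGraph V A) (q : V) : Prop :=
  ∃ w, G.transSet Set.univ w = {q}

/-- `G` is synchronizing: every vertex is synchronizing. -/
def Synchronizing (G : LabeledGraph V A) : Prop :=
  ∀ q, G.SyncVertex q

/-- `G` is follower-separated. -/
def FollowerSeparated (G : LabeledGraph V A) : Prop :=
  ∀ p q, G.follower p = G.follower q → p = q

/-- `G` is irreducible (strongly connected). -/
def StronglyConnected (G : LabeledGraph V A) : Prop :=
  ∀ p q, ∃ w, G.Walk p w q

/-- `q` is reachable from `p`. -/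
def Reachable (G : LabeledGraph V A) (p q : V) : Prop :=
  ∃ w, G.Walk p w q

/-- `C` is an irreducible component: an equivalence class of mutual reachability. -/
def IsIrredComponent (G : LabeledGraph V A) (C : Set V) : Prop :=
  ∃ p, C = { q | G.Reachable p q ∧ G.Reachable q p }

/-- `C` is terminal: everything reachable from `C` lies in `C`. -/
def TerminalSet (G : LabeledGraph V A) (C : Set V) : Prop :=
  ∀ p ∈ C, ∀ q, G.Reachable p q → q ∈ C

/-- `C` is initial: everything that reaches `C` lies in `C`. -/
def InitialSet (G : LabeledGraph V A) (C : Set V) : Prop :=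
  ∀ q ∈ C, ∀ p, G.Reachable p q → p ∈ C

/-- Subgraph induced by a set `P` of vertices. -/
def induce (G : LabeledGraph V A) (P : Set V) : LabeledGraph P A where
  Edge := fun p a q => G.Edge p.1 a q.1

/-- The graph `Ĝ`: vertices are ordered pairs of distinct vertices of `G`,
with an edge labeled `a` from `(p₁,p₂)` to `(q₁,q₂)` iff `G` has edges labeled
`a` from `p₁` to `q₁` and from `p₂` to `q₂`. -/
def pairGraph (G : LabeledGraph V A) : LabeledGraph { pq : V × V // pq.1 ≠ pq.2 } A where
  Edge := fun x a y => G.Edge x.1.1 a y.1.1 ∧ G.Edge x.1.2 a y.1.2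

end LabeledGraph

/-- The word `w` appears in the bi-infinite sequence `x`. -/
def AppearsIn {A : Type} (w : List A) (x : ℤ → A) : Prop :=
  ∃ i : ℤ, ∀ n : Fin w.length, x (i + (n : ℕ)) = w.get n

/-- The language of a subset of the full shift: all finite words appearing
in some point of `X`. -/
def lang {A : Type} (X : Set (ℤ → A)) : Set (List A) :=
  { w | ∃ x ∈ X, AppearsIn w x }

/-- `X` is a shift space. -/
def IsShiftSpace {A : Type} (X : Set (ℤ → A)) : Prop :=
  ∃ F : Set (List A), X = { x | ∀ w ∈ F, ¬ AppearsIn w x }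

/-- `X` is a shift of finite type. -/
def IsSFT {A : Type} (X : Set (ℤ → A)) : Prop :=
  ∃ F : Set (List A), F.Finite ∧ X = { x | ∀ w ∈ F, ¬ AppearsIn w x }

/-- `w` is intrinsically synchronizing for `X`. -/
def IntrinsicallySync {A : Type} (X : Set (ℤ → A)) (w : List A) : Prop :=
  w ∈ lang X ∧ ∀ u v, u ++ w ∈ lang X → w ++ v ∈ lang X → u ++ (w ++ v) ∈ lang X

/-- `X` is an irreducible shift space. -/
def IrreducibleShift {A : Type} (X : Set (ℤ → A)) : Prop :=
  ∀ u ∈ lang X, ∀ v ∈ lang X, ∃ w, u ++ (w ++ v) ∈ lang X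

/-- The follower set of a word `u` in `X`. -/
def followerX {A : Type} (X : Set (ℤ → A)) (u : List A) : Set (List A) :=
  { w | u ++ w ∈ lang X }

/-- `X` is `M`-step: every word of `B(X)` of length at least `M` is
intrinsically synchronizing for `X`. -/
def MStep {A : Type} (X : Set (ℤ → A)) (M : ℕ) : Prop :=
  ∀ w ∈ lang X, M ≤ w.length → IntrinsicallySync X w

/-- A deterministic finite automaton over state type `Q` and alphabet `A`. -/
structure DFA' (Q A : Type) where
  step : Q → A → Q
  start : Q
  accept : Set Q

/-- Extended transition function. -/
def DFA'.evalFrom {Q A : Type} (M : DFA' Q A) (q : Q) (w : List A) : Q :=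
  w.foldl M.step q

/-- The language of a DFA. -/
def DFA'.lang {Q A : Type} (M : DFA' Q A) : Set (List A) :=
  { w | M.evalFrom M.start w ∈ M.accept }

/-- Alphabet `Σ ∪ {◁, ▷}`. -/
inductive Sym3 (A : Type) : Type
  | letter : A → Sym3 A
  | lm : Sym3 A  -- ◁
  | rm : Sym3 A  -- ▷

/-- Vertices of the third reduction construction: the success state `t`,
the pre-initial states `p_i`, the fail states `r_i`, and the DFA states. -/
inductive V3 {n : ℕ} (Q : Fin n → Type) : Type
  | t : V3 Q
  | pre : Fin n → V3 Q
  | fail : Fin n → V3 Q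
  | st : (i : Fin n) → Q i → V3 Q

/-- Edges of the third reduction construction. -/
inductive Red3Edge {n : ℕ} {Q : Fin n → Type} {A : Type} (M : ∀ i, DFA' (Q i) A) :
    V3 Q → Sym3 A → V3 Q → Prop
  /-- self loop labeled `▷` on `t` -/
  | tLoop : Red3Edge M .t .rm .t
  /-- self loop labeled `▷` on `p_i` -/
  | preRm (i : Fin n) : Red3Edge M (.pre i) .rm (.pre i)
  /-- self loop labeled `a` on `p_i` for each `a ∈ Σ` -/
  | preLetter (i : Fin n) (a : A) : Red3Edge M (.pre i) (.letter a) (.pre i)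
  /-- self loop labeled `▷` on `r_i` -/
  | failRm (i : Fin n) : Red3Edge M (.fail i) .rm (.fail i)
  /-- the embedded DFA transitions -/
  | dfaStep (i : Fin n) (q : Q i) (a : A) :
      Red3Edge M (.st i q) (.letter a) (.st i ((M i).step q a))
  /-- edge labeled `◁` from `p_i` to `s_i` -/
  | enter (i : Fin n) : Red3Edge M (.pre i) .lm (.st i ((M i).start))
  /-- edge labeled `▷` from each accepting state of `M_i` to `t` -/
  | acc (i : Fin n) (q : Q i) : q ∈ (M i).accept → Red3Edge M (.st i q) .rm .t
  /-- edge labeled `▷` from each nonaccepting state of `M_i` to `r_i` -/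
  | rej (i : Fin n) (q : Q i) : q ∉ (M i).accept → Red3Edge M (.st i q) .rm (.fail i)

/-- The labeled graph `G` of the third reduction construction. -/
def Red3 {n : ℕ} {Q : Fin n → Type} {A : Type} (M : ∀ i, DFA' (Q i) A) :
    LabeledGraph (V3 Q) (Sym3 A) where
  Edge := Red3Edge M

section Aux

open LabeledGraph

variable {V B : Type} {G : LabeledGraph V B}

lemma walk_nil' {p q : V} : G.Walk p [] q ↔ p = q := Iff.rfl

lemma walk_cons' {p q : V} {a : B} {w : List B} :
    G.Walk p (a :: w) q ↔ ∃ r, G.Edge p a r ∧ G.Walk r w q := Iff.rfl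

lemma walk_append' : ∀ {u : List B} {p m q : V} (_ : G.Walk p u m) (_ : G.Walk m v q),
    G.Walk p (u ++ v) q := by
  intro u
  induction u with
  | nil => intro p m q h1 h2; cases (walk_nil'.mp h1); exact h2
  | cons a u ih =>
      intro p m q h1 h2
      obtain ⟨r, he, hw⟩ := walk_cons'.mp h1
      exact walk_cons'.mpr ⟨r, he, ih hw h2⟩

lemma walk_unique (hd : G.Deterministic) : ∀ (u : List B) {p q q' : V},
    G.Walk p u q → G.Walk p u q' → q = q' := by
  intro u
  induction u with
  | nil => intro p q q' h1 h2; exact (walk_nil'.mp h1).symm.trans (walk_nil'.mp h2)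
  | cons a u ih =>
      intro p q q' h1 h2
      obtain ⟨r, he, hw⟩ := walk_cons'.mp h1
      obtain ⟨r', he', hw'⟩ := walk_cons'.mp h2
      cases hd p a r r' he he'
      exact ih hw hw'

variable {n : ℕ} {Q : Fin n → Type} {A : Type} (M : ∀ i, DFA' (Q i) A)

lemma red3_det : (Red3 M).Deterministic := by
  intro p a q q' h1 h2
  cases h1 <;> cases h2 <;> simp_all

lemma pre_loop {u : List (Sym3 A)} (h : Sym3.lm ∉ u) (i : Fin n) :
    (Red3 M).Walk (.pre i) u (.pre i) := by
  induction u with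
  | nil => exact rfl
  | cons a u ih =>
    have ha : a ≠ Sym3.lm := fun h' => h (h' ▸ (List.mem_cons_self : a ∈ a :: u))
    have hu : Sym3.lm ∉ u := fun h' => h (List.mem_cons_of_mem a h')
    cases a with
    | letter b => exact ⟨_, Red3Edge.preLetter i b, ih hu⟩
    | lm => exact absurd rfl ha
    | rm => exact ⟨_, Red3Edge.preRm i, ih hu⟩

lemma st_letters : ∀ (v : List A) (i : Fin n) (q : Q i),
    (Red3 M).Walk (.st i q) (v.map Sym3.letter) (.st i ((M i).evalFrom q v)) := by
  intro v
  induction v with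
  | nil => intro i q; exact rfl
  | cons a v ih => intro i q; exact ⟨_, Red3Edge.dfaStep i q a, ih i ((M i).step q a)⟩

lemma t_rms : ∀ {z : List (Sym3 A)} (_ : ∀ s ∈ z, s = Sym3.rm),
    (Red3 M).Walk .t z .t := by
  intro z
  induction z with
  | nil => intro _; exact rfl
  | cons a z ih =>
    intro h
    have ha : a = Sym3.rm := h a ((List.mem_cons_self : a ∈ a :: z))
    subst ha
    exact ⟨_, Red3Edge.tLoop, ih (fun s hs => h s (List.mem_cons_of_mem _ hs))⟩

lemma fail_rms (i : Fin n) : ∀ {z : List (Sym3 A)} (_ : ∀ s ∈ z, s = Sym3.rm),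
    (Red3 M).Walk (.fail i) z (.fail i) := by
  intro z
  induction z with
  | nil => intro _; exact rfl
  | cons a z ih =>
    intro h
    have ha : a = Sym3.rm := h a ((List.mem_cons_self : a ∈ a :: z))
    subst ha
    exact ⟨_, Red3Edge.failRm i, ih (fun s hs => h s (List.mem_cons_of_mem _ hs))⟩

lemma t_walk : ∀ (z : List (Sym3 A)) (q' : V3 Q), (Red3 M).Walk .t z q' →
    q' = .t ∧ ∀ s ∈ z, s = Sym3.rm := by
  intro z
  induction z with
  | nil => intro q' h; exact ⟨(walk_nil'.mp h).symm, by simp⟩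
  | cons a z ih =>
    intro q' h
    obtain ⟨r, he, hw⟩ := walk_cons'.mp h
    cases he
    obtain ⟨h1, h2⟩ := ih q' hw
    refine ⟨h1, ?_⟩
    intro s hs
    rcases List.mem_cons.mp hs with h | h
    · exact h
    · exact h2 s h

lemma fail_walk : ∀ (z : List (Sym3 A)) (i : Fin n) (q' : V3 Q),
    (Red3 M).Walk (.fail i) z q' → q' = .fail i ∧ ∀ s ∈ z, s = Sym3.rm := by
  intro z
  induction z with
  | nil => intro i q' h; exact ⟨(walk_nil'.mp h).symm, by simp⟩
  | cons a z ih =>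
    intro i q' h
    obtain ⟨r, he, hw⟩ := walk_cons'.mp h
    cases he
    obtain ⟨h1, h2⟩ := ih i q' hw
    refine ⟨h1, ?_⟩
    intro s hs
    rcases List.mem_cons.mp hs with h | h
    · exact h
    · exact h2 s h

lemma st_walk : ∀ (y : List (Sym3 A)) (i : Fin n) (q : Q i) (q' : V3 Q),
    (Red3 M).Walk (.st i q) y q' →
    (∃ v : List A, y = v.map Sym3.letter ∧ q' = .st i ((M i).evalFrom q v)) ∨
    (∃ (v : List A) (z : List (Sym3 A)), y = v.map Sym3.letter ++ Sym3.rm :: z ∧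
      (∀ s ∈ z, s = Sym3.rm) ∧
      (((M i).evalFrom q v ∈ (M i).accept ∧ q' = .t) ∨
       ((M i).evalFrom q v ∉ (M i).accept ∧ q' = .fail i))) := by
  intro y
  induction y with
  | nil =>
    intro i q q' h
    exact Or.inl ⟨[], rfl, (walk_nil'.mp h).symm⟩
  | cons a y ih =>
    intro i q q' h
    obtain ⟨r, he, hw⟩ := walk_cons'.mp h
    cases he with
    | dfaStep _ _ b =>
      rcases ih i ((M i).step q b) q' hw with ⟨v, hy, hq⟩ | ⟨v, z, hy, hz, hd⟩
      · exact Or.inl ⟨b :: v, by simp [hy], hq⟩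
      · exact Or.inr ⟨b :: v, z, by simp [hy], hz, hd⟩
    | acc _ _ hq =>
      obtain ⟨h1, h2⟩ := t_walk M y q' hw
      exact Or.inr ⟨[], y, rfl, h2, Or.inl ⟨hq, h1⟩⟩
    | rej _ _ hq =>
      obtain ⟨h1, h2⟩ := fail_walk M y i q' hw
      exact Or.inr ⟨[], y, rfl, h2, Or.inr ⟨hq, h1⟩⟩

lemma pre_walk : ∀ (u : List (Sym3 A)) (i : Fin n) (q' : V3 Q),
    (Red3 M).Walk (.pre i) u q' →
    (q' = .pre i ∧ Sym3.lm ∉ u) ∨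
    (∃ x y, u = x ++ Sym3.lm :: y ∧ Sym3.lm ∉ x ∧
      (Red3 M).Walk (.st i (M i).start) y q') := by
  intro u
  induction u with
  | nil => intro i q' h; exact Or.inl ⟨(walk_nil'.mp h).symm, by simp⟩
  | cons a u ih =>
    intro i q' h
    obtain ⟨r, he, hw⟩ := walk_cons'.mp h
    cases he with
    | preRm =>
      rcases ih i q' hw with ⟨h1, h2⟩ | ⟨x, y, h1, h2, h3⟩
      · exact Or.inl ⟨h1, by simp [h2]⟩
      · exact Or.inr ⟨Sym3.rm :: x, y, by simp [h1], by simp [h2], h3⟩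
    | preLetter _ b =>
      rcases ih i q' hw with ⟨h1, h2⟩ | ⟨x, y, h1, h2, h3⟩
      · exact Or.inl ⟨h1, by simp [h2]⟩
      · exact Or.inr ⟨Sym3.letter b :: x, y, by simp [h1], by simp [h2], h3⟩
    | enter => exact Or.inr ⟨[], u, rfl, by simp, hw⟩

lemma sync_upper (hn : 2 ≤ n) {w : List A} (hw : w ∈ ⋂ i, (M i).lang) :
    (Red3 M).SyncWord (Sym3.lm :: (w.map Sym3.letter ++ [Sym3.rm])) := by
  refine ⟨.t, ?_⟩
  have hacc : ∀ i, (M i).evalFrom (M i).start w ∈ (M i).accept := fun i =>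
    Set.mem_iInter.mp hw i
  have hwalk : ∀ i : Fin n,
      (Red3 M).Walk (.pre i) (Sym3.lm :: (w.map Sym3.letter ++ [Sym3.rm])) .t := by
    intro i
    refine ⟨_, Red3Edge.enter i, ?_⟩
    exact walk_append' (st_letters M w i (M i).start)
      ⟨_, Red3Edge.acc i _ (hacc i), rfl⟩
  ext q'
  simp only [LabeledGraph.transSet, Set.mem_setOf_eq, Set.mem_singleton_iff]
  constructor
  · rintro ⟨q0, -, hq0⟩
    obtain ⟨r, he, hw2⟩ := walk_cons'.mp hq0
    cases he with
    | enter i =>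
      exact walk_unique (red3_det M) _ (walk_cons'.mpr ⟨_, Red3Edge.enter i, hw2⟩)
        (hwalk i)
  · rintro rfl
    exact ⟨.pre ⟨0, by omega⟩, trivial, hwalk _⟩

lemma sync_lower (hn : 2 ≤ n) {u : List (Sym3 A)} (hu : (Red3 M).SyncWord u) :
    ∃ w ∈ ⋂ i, (M i).lang, 2 + w.length ≤ u.length := by
  classical
  obtain ⟨r, hr⟩ := hu
  have key : ∀ p q', (Red3 M).Walk p u q' → q' = r := by
    intro p q' h
    have : q' ∈ (Red3 M).transSet Set.univ u := ⟨p, trivial, h⟩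
    rw [hr] at this
    exact this
  have hne2 : ∀ j : Fin n, ∃ j' : Fin n, j' ≠ j := by
    intro j
    rcases eq_or_ne j ⟨0, by omega⟩ with rfl | h
    · exact ⟨⟨1, by omega⟩, by simp [Fin.ext_iff]⟩
    · exact ⟨⟨0, by omega⟩, Ne.symm h⟩
  have hlm : Sym3.lm ∈ u := by
    by_contra hlm
    have h0 : (V3.pre ⟨0, by omega⟩ : V3 Q) = r := key _ _ (pre_loop M hlm _)
    have h1 : (V3.pre ⟨1, by omega⟩ : V3 Q) = r := key _ _ (pre_loop M hlm _)
    rw [← h1] at h0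
    injection h0 with h2
    simp [Fin.ext_iff] at h2
  have hrmem : r ∈ (Red3 M).transSet Set.univ u := by rw [hr]; rfl
  obtain ⟨q0, -, hq0⟩ := hrmem
  cases q0 with
  | t =>
    obtain ⟨-, h2⟩ := t_walk M u r hq0
    exact absurd (h2 _ hlm) (by simp)
  | fail i =>
    obtain ⟨-, h2⟩ := fail_walk M u i r hq0
    exact absurd (h2 _ hlm) (by simp)
  | st i q =>
    rcases st_walk M u i q r hq0 with ⟨v, hy, -⟩ | ⟨v, z, hy, hz, -⟩
    · rw [hy] at hlm
      simp [List.mem_map] at hlm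
    · rw [hy] at hlm
      rcases List.mem_append.mp hlm with h | h
      · simp [List.mem_map] at h
      · rcases List.mem_cons.mp h with h | h
        · exact absurd h (by simp)
        · exact absurd (hz _ h) (by simp)
  | pre i =>
    rcases pre_walk M u i r hq0 with ⟨-, h2⟩ | ⟨x, y, hxy, hx, hwy⟩
    · exact absurd hlm h2
    rcases st_walk M y i _ r hwy with ⟨v, hy, hst⟩ | ⟨v, z, hy, hz, -⟩
    · obtain ⟨j, hj⟩ := hne2 i
      have hcon : (V3.st j ((M j).evalFrom (M j).start v) : V3 Q) = r := by
        apply key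
        rw [hxy, hy]
        exact walk_append' (pre_loop M hx j) ⟨_, Red3Edge.enter j, st_letters M v j _⟩
      rw [hst] at hcon
      injection hcon with h3 h4
      exact absurd h3 hj
    · have hwalkj : ∀ j : Fin n, ∃ e : V3 Q, (Red3 M).Walk (.pre j) u e ∧
          (((M j).evalFrom (M j).start v ∈ (M j).accept ∧ e = .t) ∨
           ((M j).evalFrom (M j).start v ∉ (M j).accept ∧ e = .fail j)) := by
        intro j
        by_cases hj : (M j).evalFrom (M j).start v ∈ (M j).accept
        · refine ⟨.t, ?_, Or.inl ⟨hj, rfl⟩⟩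
          rw [hxy, hy]
          exact walk_append' (pre_loop M hx j) ⟨_, Red3Edge.enter j,
            walk_append' (st_letters M v j _) ⟨_, Red3Edge.acc j _ hj, t_rms M hz⟩⟩
        · refine ⟨.fail j, ?_, Or.inr ⟨hj, rfl⟩⟩
          rw [hxy, hy]
          exact walk_append' (pre_loop M hx j) ⟨_, Red3Edge.enter j,
            walk_append' (st_letters M v j _) ⟨_, Red3Edge.rej j _ hj, fail_rms M j hz⟩⟩
      have hall : ∀ j, (M j).evalFrom (M j).start v ∈ (M j).accept := by
        intro j
        by_contra hj
        obtain ⟨e, hwalk, hd⟩ := hwalkj j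
        rcases hd with ⟨hj', -⟩ | ⟨-, rfl⟩
        · exact hj hj'
        · have hfj : (V3.fail j : V3 Q) = r := key _ _ hwalk
          obtain ⟨j', hj'⟩ := hne2 j
          obtain ⟨e', hwalk', hd'⟩ := hwalkj j'
          have he' : e' = r := key _ _ hwalk'
          rcases hd' with ⟨-, rfl⟩ | ⟨-, rfl⟩
          · rw [← hfj] at he'
            simp at he'
          · rw [← hfj] at he'
            injection he' with h3
            exact hj' h3
      refine ⟨v, Set.mem_iInter.mpr (fun j => hall j), ?_⟩
      rw [hxy, hy]
      simp only [List.length_append, List.length_cons, List.length_map]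
      omega

end Aux

/-- Let `n ≥ 2`, let `M_1, …, M_n` be DFAs over a common alphabet `Σ`, and let
`G` be the graph of the third reduction construction. If `⋂ᵢ L(Mᵢ) ≠ ∅`, then
the minimum length of a synchronizing word for `G` equals 2 plus the minimum
length of a word in `⋂ᵢ L(Mᵢ)`. -/
theorem stmt17 {n : ℕ} {Q : Fin n → Type} {A : Type}
    [Fintype A] [∀ i, Fintype (Q i)] (hn : 2 ≤ n)
    (M : ∀ i, DFA' (Q i) A)
    (hne : (⋂ i, (M i).lang).Nonempty) :
    sInf { m : ℕ | ∃ u : List (Sym3 A), (Red3 M).SyncWord u ∧ u.length = m } =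
      2 + sInf { m : ℕ | ∃ w ∈ ⋂ i, (M i).lang, w.length = m } := by
  obtain ⟨w0, hw0⟩ := hne
  have hS2ne : { m : ℕ | ∃ w ∈ ⋂ i, (M i).lang, w.length = m }.Nonempty :=
    ⟨w0.length, w0, hw0, rfl⟩
  obtain ⟨w, hw, hwlen⟩ := Nat.sInf_mem hS2ne
  have hsync := sync_upper M hn hw
  have hS1ne : { m : ℕ | ∃ u : List (Sym3 A), (Red3 M).SyncWord u ∧ u.length = m }.Nonempty :=
    ⟨_, _, hsync, rfl⟩
  obtain ⟨u, hu, hulen⟩ := Nat.sInf_mem hS1ne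
  obtain ⟨w', hw', hlen'⟩ := sync_lower M hn hu
  have h1 : sInf { m : ℕ | ∃ w ∈ ⋂ i, (M i).lang, w.length = m } ≤ w'.length :=
    Nat.sInf_le ⟨w', hw', rfl⟩
  apply le_antisymm
  · apply Nat.sInf_le
    refine ⟨Sym3.lm :: (w.map Sym3.letter ++ [Sym3.rm]), hsync, ?_⟩
    simp only [List.length_cons, List.length_append, List.length_map, List.length_nil]
    omega
  · rw [← hulen, ← hwlen]
    rw [← hwlen] at h1
    omega
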